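/- Let d₁ ≥ d₂ ≥ ⋯ ≥ d_s be positive integers with Σᵢ(2^{dᵢ} − 1) = n. The multiset {d₁,…,d_s} equals the greedy almost binary partition of n if and only if d₁ > d₂ > ⋯ > d_{s−1} (i.e., only the smallest part may repeat, and at most twice). -/

import Mathlib

def nu (d : ℕ) : ℕ := 2 ^ d - 1

def IsABP (n : ℕ) (P : Multiset ℕ) : Prop :=
  (∀ i ∈ P, 1 ≤ i) ∧ (P.map nu).sum = n

noncomputable def tauP (n : ℕ) : ℕ :=
  sInf {k | ∃ P : Multiset ℕ, IsABP n P ∧ P.card = k}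

def IsSABP (n : ℕ) (P N : Multiset ℕ) : Prop :=
  (∀ i ∈ P, 1 ≤ i) ∧ (∀ j ∈ N, 1 ≤ j) ∧
    (n : ℤ) = ((P.map nu).sum : ℤ) - ((N.map nu).sum : ℤ)

noncomputable def tau (n : ℕ) : ℕ :=
  sInf {k | ∃ P N : Multiset ℕ, IsSABP n P N ∧ P.card + N.card = k}

noncomputable def tauC (n : ℕ) : ℕ :=
  sInf {k | ∃ (r : ℕ) (N : Multiset ℕ), IsSABP n {r} N ∧ 1 + N.card = k}

def greedy : ℕ → Multiset ℕ
  | 0 => 0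
  | (n+1) => Nat.log 2 (n+2) ::ₘ greedy (n + 1 - nu (Nat.log 2 (n+2)))
  decreasing_by
    have h1 : 0 < Nat.log 2 (n+2) := Nat.log_pos one_lt_two (by omega)
    have h2 : 2 ^ 1 ≤ 2 ^ Nat.log 2 (n+2) := Nat.pow_le_pow_right (by norm_num) h1
    simp only [nu] at *
    omega

open Classical in
noncomputable def dualf (n : ℕ) : ℕ :=
  if ∃ k : ℕ, 1 ≤ k ∧ n = 2 ^ k - 1 then n else 3 * 2 ^ Nat.log 2 n - n - 2

def parentT (v : ℕ × ℕ) : ℕ × ℕ := (v.1 + 1, v.2 / 2)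

def levelT (v : ℕ × ℕ) : ℕ := v.1 + 1

def treeGraph : SimpleGraph (ℕ × ℕ) where
  Adj u v := parentT u = v ∨ parentT v = u
  symm := by constructor; intro u v h; tauto
  loopless := by constructor; intro v h; simp [parentT, Prod.ext_iff] at h

noncomputable def cutCard (S : Finset (ℕ × ℕ)) : ℕ :=
  Set.ncard {v : ℕ × ℕ | ¬ ((v ∈ S) ↔ (parentT v ∈ S))}

def leafCount (S : Finset (ℕ × ℕ)) : ℕ := (S.filter (fun v => v.1 = 0)).card

def completeSubtree (v : ℕ × ℕ) : Finset (ℕ × ℕ) :=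
  (Finset.range (v.1 + 1)).biUnion (fun a =>
    (Finset.Ico (v.2 * 2 ^ (v.1 - a)) ((v.2 + 1) * 2 ^ (v.1 - a))).image (fun i => (a, i)))

def Bd (d : ℕ) : Finset (ℕ × ℕ) := completeSubtree (d - 1, 0)

def cutBd (d : ℕ) (X : Finset (ℕ × ℕ)) : ℕ :=
  ((Bd d).filter (fun v => v.1 + 1 < d ∧ ¬((v ∈ X) ↔ parentT v ∈ X))).card

noncomputable def deltaB (d i : ℕ) : ℕ :=
  sInf {c | ∃ X ⊆ Bd d, X.card = i ∧ cutBd d X = c}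

noncomputable def tauC0 (n : ℕ) : ℕ := if n = 0 then 0 else tauC n

def fS (S : Finset (ℕ × ℕ)) (v : ℕ × ℕ) : ℤ :=
  if v ∈ S ∧ parentT v ∉ S then 2 ^ levelT v - 1
  else if v ∉ S ∧ parentT v ∈ S then -(2 ^ levelT v - 1)
  else 0

lemma nu_pos {d : ℕ} (h : 1 ≤ d) : 1 ≤ nu d := by
  have : 2 ^ 1 ≤ 2 ^ d := Nat.pow_le_pow_right (by norm_num) h
  simp only [nu]; omega

lemma le_log_of_nu_le {d n : ℕ} (h : nu d ≤ n) : d ≤ Nat.log 2 (n + 1) := by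
  have h1 : 1 ≤ 2 ^ d := Nat.one_le_two_pow
  have h2 : 2 ^ d ≤ n + 1 := by simp only [nu] at h; omega
  exact Nat.le_log_of_pow_le one_lt_two h2

lemma nu_log_le (n : ℕ) : nu (Nat.log 2 (n + 1)) ≤ n := by
  have := Nat.pow_log_le_self 2 (show n + 1 ≠ 0 by omega)
  simp only [nu]; omega

lemma lt_nu_log_succ (n : ℕ) : n < nu (Nat.log 2 (n + 1) + 1) := by
  have := Nat.lt_pow_succ_log_self (b := 2) one_lt_two (n + 1)
  simp only [nu]
  have : 1 ≤ 2 ^ (Nat.log 2 (n + 1) + 1) := Nat.one_le_two_pow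
  omega

lemma greedy_eq {n : ℕ} (h : 1 ≤ n) :
    greedy n = Nat.log 2 (n + 1) ::ₘ greedy (n - nu (Nat.log 2 (n + 1))) := by
  obtain ⟨m, rfl⟩ : ∃ m, n = m + 1 := ⟨n - 1, by omega⟩
  rw [greedy]

lemma greedy_zero : greedy 0 = 0 := by rw [greedy]

lemma sumBound : ∀ (t : List ℕ) (D : ℕ), t.Pairwise (· ≥ ·) →
    t.dropLast.Pairwise (· > ·) → (∀ d ∈ t, d ≤ D) →
    (t.map nu).sum ≤ 2 ^ (D + 1) - 2
  | [], D, _, _, _ => by simp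
  | [a], D, _, _, hle => by
      have ha : a ≤ D := hle a (by simp)
      have h1 : 2 ^ a ≤ 2 ^ D := Nat.pow_le_pow_right (by norm_num) ha
      have h2 : 2 ^ D + 2 ^ D = 2 ^ (D + 1) := by ring
      simp only [List.map_cons, List.map_nil, List.sum_cons, List.sum_nil, nu]
      omega
  | [a, b], D, _, _, hle => by
      have ha : a ≤ D := hle a (by simp)
      have hb : b ≤ D := hle b (by simp)
      have h1 : 2 ^ a ≤ 2 ^ D := Nat.pow_le_pow_right (by norm_num) ha
      have h1' : 2 ^ b ≤ 2 ^ D := Nat.pow_le_pow_right (by norm_num) hb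
      have h2 : 2 ^ D + 2 ^ D = 2 ^ (D + 1) := by ring
      simp only [List.map_cons, List.map_nil, List.sum_cons, List.sum_nil, nu]
      omega
  | a :: b :: c :: r, D, hs, hd, hle => by
      have hab : a > b := by
        have : b ∈ (b :: c :: r).dropLast := by
          simp [List.dropLast]
        exact (List.pairwise_cons.mp hd).1 b this
      have hsorted' : (b :: c :: r).Pairwise (· ≥ ·) := (List.pairwise_cons.mp hs).2
      have hdl' : (b :: c :: r).dropLast.Pairwise (· > ·) := (List.pairwise_cons.mp hd).2
      have hle' : ∀ d ∈ b :: c :: r, d ≤ a - 1 := by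
        intro d hdmem
        have : b ≥ d := by
          rw [List.mem_cons] at hdmem
          rcases hdmem with h | h
          · omega
          · exact (List.pairwise_cons.mp hsorted').1 d h
        omega
      have IH := sumBound (b :: c :: r) (a - 1) hsorted' hdl' hle'
      have ha1 : a - 1 + 1 = a := by omega
      rw [ha1] at IH
      have haD : a ≤ D := hle a (by simp)
      have h1 : 2 ^ a ≤ 2 ^ D := Nat.pow_le_pow_right (by norm_num) haD
      have h1' : 1 ≤ 2 ^ a := Nat.one_le_two_pow
      have h2 : 2 ^ D + 2 ^ D = 2 ^ (D + 1) := by ring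
      simp only [List.map_cons, List.sum_cons, nu] at IH ⊢
      omega

lemma nu_le_nu {a b : ℕ} (h : a ≤ b) : nu a ≤ nu b := by
  have := Nat.pow_le_pow_right (show 0 < 2 by norm_num) h
  simp only [nu]; omega

lemma nu_succ (d : ℕ) : nu (d + 1) = 2 * nu d + 1 := by
  have : 1 ≤ 2 ^ d := Nat.one_le_two_pow
  simp only [nu, pow_succ]; omega

lemma stmt3_aux : ∀ n : ℕ, 1 ≤ n → ∀ l : List ℕ, l.Pairwise (· ≥ ·) →
    (∀ d ∈ l, 1 ≤ d) → (l.map nu).sum = n →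
    ((↑l : Multiset ℕ) = greedy n ↔ l.dropLast.Pairwise (· > ·)) := by
  intro n
  induction n using Nat.strong_induction_on with
  | _ n IH =>
  intro hn l hsort hpos hsum
  obtain ⟨L, hLdef⟩ : ∃ L, Nat.log 2 (n + 1) = L := ⟨_, rfl⟩
  have hLpos : 1 ≤ L := hLdef ▸ Nat.log_pos one_lt_two (by omega)
  have hnuL : nu L ≤ n := hLdef ▸ nu_log_le n
  have hnuLpos : 1 ≤ nu L := nu_pos hLpos
  have hnlt : n < nu (L + 1) := hLdef ▸ lt_nu_log_succ n
  have hnusucc : nu (L + 1) = 2 * nu L + 1 := nu_succ L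
  have hle_log : ∀ d : ℕ, nu d ≤ n → d ≤ L := fun d h => hLdef ▸ le_log_of_nu_le h
  have hgr : greedy n = L ::ₘ greedy (n - nu L) := by rw [greedy_eq hn, hLdef]
  have hn'lt : n - nu L < n := by omega
  cases l with
  | nil => simp at hsum; omega
  | cons d₁ t =>
    have hsum' : nu d₁ + (t.map nu).sum = n := by simpa using hsum
    have hall : ∀ b ∈ t, d₁ ≥ b := (List.pairwise_cons.mp hsort).1
    have htsort : t.Pairwise (· ≥ ·) := (List.pairwise_cons.mp hsort).2
    have htpos : ∀ d ∈ t, 1 ≤ d := fun d hd => hpos d (by simp [hd])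
    have hd1L : d₁ ≤ L := hle_log d₁ (by omega)
    constructor
    · -- forward direction
      intro h
      rw [hgr, ← Multiset.cons_coe] at h
      have hLd1 : L ≤ d₁ := by
        have hmem : L ∈ d₁ ::ₘ (↑t : Multiset ℕ) := h ▸ Multiset.mem_cons_self _ _
        rcases Multiset.mem_cons.mp hmem with h' | h'
        · omega
        · exact hall L (by simpa using h')
      have hd1eq : d₁ = L := le_antisymm hd1L hLd1
      rw [hd1eq] at h
      have ht : (↑t : Multiset ℕ) = greedy (n - nu L) :=
        (Multiset.cons_inj_right L).mp h
      rw [hd1eq] at hsum'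
      by_cases h0 : n - nu L = 0
      · rw [h0, greedy_zero] at ht
        have : t = [] := by simpa using ht
        subst this
        simp [List.dropLast]
      · have hn' : 1 ≤ n - nu L := by omega
        have hsumt : (t.map nu).sum = n - nu L := by omega
        have hdt : t.dropLast.Pairwise (· > ·) :=
          (IH (n - nu L) hn'lt hn' t htsort htpos hsumt).mp ht
        cases t with
        | nil => simp [List.dropLast]
        | cons b r =>
          cases r with
          | nil => simp [List.dropLast]
          | cons c r' =>
            have hbpos : 1 ≤ b := htpos b (by simp)
            have hcpos : 1 ≤ c := htpos c (by simp)
            have hnuc : 1 ≤ nu c := nu_pos hcpos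
            have hsumt' : nu b + nu c + ((r'.map nu).sum) = n - nu L := by
              simp only [List.map_cons, List.sum_cons] at hsumt
              omega
            have hbL : b < L := by
              by_contra hcon
              push_neg at hcon
              have hbub : b ≤ L := hle_log b (by omega)
              have hbeq : b = L := le_antisymm hbub hcon
              rw [hbeq] at hsumt'
              omega
            have hballe : ∀ x ∈ b :: c :: r', x ≤ b := by
              intro x hx
              rw [List.mem_cons] at hx
              rcases hx with h' | h'
              · omega
              · exact (List.pairwise_cons.mp htsort).1 x h'
            show ((d₁ :: b :: c :: r').dropLast).Pairwise (· > ·)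
            have hdrop : (d₁ :: b :: c :: r').dropLast
                = d₁ :: (b :: c :: r').dropLast := rfl
            rw [hdrop, List.pairwise_cons]
            refine ⟨?_, hdt⟩
            intro x hx
            have hx' : x ∈ b :: c :: r' := List.dropLast_subset _ hx
            have := hballe x hx'
            omega
    · -- reverse direction
      intro hd
      have hbound : n ≤ 2 ^ (d₁ + 1) - 2 := by
        have := sumBound (d₁ :: t) d₁ hsort hd
          (by intro d hdm
              rw [List.mem_cons] at hdm
              rcases hdm with h' | h'
              · omega
              · exact hall d h')
        omega
      have hLd1 : L ≤ d₁ := by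
        by_contra hcon
        push_neg at hcon
        have h1 : nu (d₁ + 1) ≤ nu L := nu_le_nu hcon
        have h2 : (1:ℕ) ≤ 2 ^ (d₁ + 1) := Nat.one_le_two_pow
        have h3 : 2 ^ L - 1 ≤ n := by simpa only [nu] using hnuL
        simp only [nu] at h1
        omega
      have hd1eq : d₁ = L := le_antisymm hd1L hLd1
      rw [hgr, ← Multiset.cons_coe, ← hd1eq, Multiset.cons_inj_right, hd1eq]
      cases t with
      | nil =>
        have h0 : n - nu L = 0 := by
          simp only [List.map_nil, List.sum_nil] at hsum'
          rw [hd1eq] at hsum'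
          omega
        rw [h0, greedy_zero]
        rfl
      | cons b r =>
        have hbpos : 1 ≤ b := htpos b (by simp)
        have hnub : 1 ≤ nu b := nu_pos hbpos
        have hsum'' : nu L + ((b :: r).map nu).sum = n := by rw [← hd1eq]; exact hsum'
        have hn'' : 1 ≤ n - nu L := by
          simp only [List.map_cons, List.sum_cons] at hsum''
          omega
        have hsumt : ((b :: r).map nu).sum = n - nu L := by omega
        have hdt : (b :: r).dropLast.Pairwise (· > ·) := by
          have heq : (d₁ :: b :: r).dropLast = d₁ :: (b :: r).dropLast := rfl
          rw [heq] at hd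
          exact (List.pairwise_cons.mp hd).2
        exact (IH (n - nu L) hn'lt hn'' (b :: r) htsort htpos hsumt).mpr hdt

theorem stmt3 (n : ℕ) (hn : 1 ≤ n) (l : List ℕ)
    (hsort : l.Pairwise (· ≥ ·)) (hpos : ∀ d ∈ l, 1 ≤ d)
    (hsum : (l.map nu).sum = n) :
    (↑l : Multiset ℕ) = greedy n ↔ l.dropLast.Pairwise (· > ·) := by
  exact stmt3_aux n hn l hsort hpos hsum
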